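/- arXiv:1405.3843 — 5 statements merged into one kernel-verified Lean document; each statement's English description precedes it below -/
import Mathlib

section
/- For all real z with |z| ≤ 10, log((e^{-z/2} + e^{z/2})/2) ≥ z^2/16 - z^4/192. -/
lemma cosh_quad_lb_nonneg (x : ℝ) (hx : 0 ≤ x) : 1 + x ^ 2 / 2 ≤ Real.cosh x := by
  have hs : x / 2 ≤ Real.sinh (x / 2) := Real.self_le_sinh_iff.mpr (by linarith)
  have h2 : Real.cosh (2 * (x / 2)) = Real.cosh (x / 2) ^ 2 + Real.sinh (x / 2) ^ 2 := Real.cosh_two_mul _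
  have hx2 : 2 * (x / 2) = x := by ring
  rw [hx2] at h2
  have hsq : Real.cosh (x / 2) ^ 2 = Real.sinh (x / 2) ^ 2 + 1 := Real.cosh_sq _
  nlinarith [hs, sq_nonneg (Real.sinh (x / 2) - x / 2)]

lemma cosh_quad_lb (x : ℝ) : 1 + x ^ 2 / 2 ≤ Real.cosh x := by
  rcases le_total 0 x with hx | hx
  · exact cosh_quad_lb_nonneg x hx
  · have := cosh_quad_lb_nonneg (-x) (by linarith)
    rw [Real.cosh_neg] at this
    nlinarith [this]

theorem log_cosh_lower (z : ℝ) (hz : |z| ≤ 10) :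
    Real.log ((Real.exp (-z / 2) + Real.exp (z / 2)) / 2) ≥ z ^ 2 / 16 - z ^ 4 / 192 := by
  have hceq : (Real.exp (-z / 2) + Real.exp (z / 2)) / 2 = Real.cosh (z / 2) := by
    rw [Real.cosh_eq]; ring_nf
  rw [hceq]
  have hcb : 1 + z ^ 2 / 8 ≤ Real.cosh (z / 2) := by
    have := cosh_quad_lb (z / 2)
    nlinarith
  have hcpos : 0 < Real.cosh (z / 2) := lt_of_lt_of_le one_pos (Real.one_le_cosh _)
  rcases le_total (z ^ 2) 12 with h12 | h12
  · -- small case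
    have hz2 : 0 ≤ z ^ 2 := sq_nonneg z
    have ht0 : 0 ≤ z ^ 2 / 16 - z ^ 4 / 192 := by nlinarith
    have ht1 : z ^ 2 / 16 - z ^ 4 / 192 < 1 := by nlinarith [sq_nonneg (z ^ 2 - 6)]
    rw [ge_iff_le, Real.le_log_iff_exp_le hcpos]
    set t := z ^ 2 / 16 - z ^ 4 / 192 with ht
    have h1 : 1 - t ≤ Real.exp (-t) := by
      have := Real.add_one_le_exp (-t); linarith
    have hexp : Real.exp t * (1 - t) ≤ 1 := by
      calc Real.exp t * (1 - t) ≤ Real.exp t * Real.exp (-t) :=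
            mul_le_mul_of_nonneg_left h1 (Real.exp_pos t).le
        _ = 1 := by rw [← Real.exp_add]; simp
    have hexp' : Real.exp t ≤ 1 / (1 - t) := by
      rw [le_div_iff₀ (by linarith : 0 < 1 - t)]
      exact hexp
    refine le_trans hexp' ?_
    rw [div_le_iff₀ (by linarith : 0 < 1 - t)]
    have hkey : 1 ≤ (1 + z ^ 2 / 8) * (1 - t) := by
      rw [ht]
      nlinarith [sq_nonneg (z ^ 2 - 2), sq_nonneg z, sq_nonneg (z ^ 3)]
    nlinarith [hcb, ht1]
  · -- large case: RHS ≤ 0 ≤ log cosh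
    have hrhs : z ^ 2 / 16 - z ^ 4 / 192 ≤ 0 := by nlinarith [sq_nonneg z]
    have : 0 ≤ Real.log (Real.cosh (z / 2)) :=
      Real.log_nonneg (Real.one_le_cosh _)
    linarith
end

section
/- Let D ≥ 2 and β = 1/(8D). For all x ∈ [-1,1] and all w ∈ [-D, D], log(1 + e^{x w}) ≥ log 2 + (x w)/2 + (β/2)(x w)^2. -/
open Real

/-- cosh s ≥ 1 + s²/2 -/
lemma cosh_ge_one_add_sq (s : ℝ) : 1 + s ^ 2 / 2 ≤ Real.cosh s := by
  wlog hs : 0 ≤ s with H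
  · have := H (-s) (by linarith [le_of_not_ge hs])
    simpa [Real.cosh_neg] using this
  rcases eq_or_lt_of_le hs with h | h
  · simp [← h]
  have h1 : s / 2 ≤ Real.sinh (s / 2) := Real.self_le_sinh_iff.mpr (by linarith)
  have h2 : Real.cosh s = 1 + 2 * Real.sinh (s / 2) ^ 2 := by
    have := Real.cosh_sq (s / 2)
    have h3 : Real.cosh s = 2 * Real.cosh (s / 2) ^ 2 - 1 := by
      have := Real.cosh_two_mul (s / 2)
      rw [show 2 * (s / 2) = s by ring] at this
      linarith [this]
    nlinarith [this, h3]
  nlinarith [h1, Real.sinh_nonneg_iff.mpr (show (0:ℝ) ≤ s / 2 by linarith)]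

lemma key (D s : ℝ) (hD : 2 ≤ D) (hs0 : 0 ≤ s) (hs : s ≤ D / 2) :
    s ^ 2 / (4 * D) ≤ Real.log (Real.cosh s) := by
  have hDpos : (0:ℝ) < D := by linarith
  rcases le_or_gt s 1 with h1 | h1
  · -- log cosh s ≥ log (1 + s²/2) ≥ (s²/2)/(1+s²/2) ≥ s²/3 ≥ s²/(4D)
    have hc := cosh_ge_one_add_sq s
    have hpos : (0:ℝ) < 1 + s ^ 2 / 2 := by nlinarith
    have hlog1 : Real.log (1 + s ^ 2 / 2) ≤ Real.log (Real.cosh s) :=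
      Real.log_le_log hpos hc
    -- log(1+u) ≥ u/(1+u)
    have hlog2 : (s ^ 2 / 2) / (1 + s ^ 2 / 2) ≤ Real.log (1 + s ^ 2 / 2) := by
      have h := Real.log_le_sub_one_of_pos (show (0:ℝ) < (1 + s ^ 2 / 2)⁻¹ by positivity)
      rw [Real.log_inv] at h
      have : (1 + s ^ 2 / 2)⁻¹ - 1 = -((s ^ 2 / 2) / (1 + s ^ 2 / 2)) := by
        field_simp
        ring
      linarith [this ▸ h]
    have hu : s ^ 2 ≤ 1 := by nlinarith
    have hfrac : s ^ 2 / (4 * D) ≤ (s ^ 2 / 2) / (1 + s ^ 2 / 2) := by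
      rw [div_le_div_iff₀ (by positivity) (by positivity)]
      nlinarith [sq_nonneg s]
    linarith
  · -- s > 1 : log cosh s ≥ s - log 2 ≥ s/8 ≥ s²/(4D)
    have hc : Real.exp s / 2 ≤ Real.cosh s := by
      rw [Real.cosh_eq]
      have := (Real.exp_pos (-s)).le
      linarith
    have hlog1 : Real.log (Real.exp s / 2) ≤ Real.log (Real.cosh s) :=
      Real.log_le_log (by positivity) hc
    have hlog2 : Real.log (Real.exp s / 2) = s - Real.log 2 := by
      rw [Real.log_div (Real.exp_ne_zero s) (by norm_num), Real.log_exp]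
    have hl2 : Real.log 2 < 0.6931471808 := Real.log_two_lt_d9
    have hsq : s ^ 2 / (4 * D) ≤ s / 8 := by
      rw [div_le_div_iff₀ (by positivity) (by norm_num)]
      nlinarith
    nlinarith [hlog1, hlog2 ▸ hlog1]

theorem logistic_ge_mixed_approx (D : ℝ) (hD : 2 ≤ D) (x w : ℝ)
    (hx : x ∈ Set.Icc (-1 : ℝ) 1) (hw : w ∈ Set.Icc (-D) D) :
    Real.log (1 + Real.exp (x * w)) ≥
      Real.log 2 + x * w / 2 + (1 / (8 * D)) / 2 * (x * w) ^ 2 := by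
  obtain ⟨hx1, hx2⟩ := hx
  obtain ⟨hw1, hw2⟩ := hw
  have hDpos : (0:ℝ) < D := by linarith
  set t := x * w with ht
  have habs : |t| ≤ D := by
    rw [abs_mul]
    calc |x| * |w| ≤ 1 * D := by
          apply mul_le_mul (abs_le.mpr ⟨hx1, hx2⟩) (abs_le.mpr ⟨hw1, hw2⟩)
            (abs_nonneg w) one_pos.le
      _ = D := one_mul D
  -- identity: 1 + exp t = 2 * cosh (t/2) * exp (t/2)
  have hid : 1 + Real.exp t = 2 * Real.cosh (t / 2) * Real.exp (t / 2) := by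
    rw [Real.cosh_eq]
    rw [show 2 * ((Real.exp (t / 2) + Real.exp (-(t / 2))) / 2) * Real.exp (t / 2)
        = Real.exp (t / 2) * Real.exp (t / 2) + Real.exp (-(t / 2)) * Real.exp (t / 2) by ring]
    rw [← Real.exp_add, ← Real.exp_add, show t / 2 + t / 2 = t by ring,
        show -(t / 2) + t / 2 = 0 by ring, Real.exp_zero]
    ring
  have hcosh_pos := Real.cosh_pos (t / 2)
  have hlogid : Real.log (1 + Real.exp t)
      = Real.log 2 + Real.log (Real.cosh (t / 2)) + t / 2 := by
    rw [hid, Real.log_mul (by positivity) (Real.exp_ne_zero _),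
        Real.log_mul (by norm_num) (ne_of_gt hcosh_pos), Real.log_exp]
  have hkey := key D (|t| / 2) hD (by positivity) (by linarith [habs])
  have hceq : Real.cosh (|t| / 2) = Real.cosh (t / 2) := by
    rw [show |t| / 2 = |t / 2| by rw [abs_div]; norm_num, Real.cosh_abs]
  rw [hceq] at hkey
  have hsq : (|t| / 2) ^ 2 = t ^ 2 / 4 := by
    rw [div_pow, sq_abs]; norm_num
  rw [hsq] at hkey
  have : (1 / (8 * D)) / 2 * t ^ 2 ≤ Real.log (Real.cosh (t / 2)) := by
    have : t ^ 2 / 4 / (4 * D) = (1 / (8 * D)) / 2 * t ^ 2 := by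
      field_simp
      ring
    linarith [this ▸ hkey]
  rw [ge_iff_le, hlogid]
  linarith
end

section
/- Fix x with |x| ≤ 1/D and D ≥ 2, and let ℓ(w) = log(1 + e^{xw}). Then for all w, w_0 ∈ [-D, D]: ℓ(w) ≥ ℓ(w_0) + ℓ'(w_0)(w - w_0) + (1/(16D))·(ℓ'(w_0))^2·(w - w_0)^2. -/
open Real Set

lemma logistic_key : ∀ t : ℝ, |t| ≤ 1 → 1 / 16 ≤ Real.exp t / (1 + Real.exp t) ^ 2 := by
  intro t ht
  rw [abs_le] at ht
  have h1 : Real.exp t ≤ 3 := by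
    calc Real.exp t ≤ Real.exp 1 := Real.exp_le_exp.2 ht.2
    _ ≤ 3 := by nlinarith [Real.exp_one_lt_d9]
  have h2 : (1:ℝ)/3 ≤ Real.exp t := by
    have : Real.exp (-1) ≤ Real.exp t := Real.exp_le_exp.2 ht.1
    have h3 : Real.exp (-1) = 1 / Real.exp 1 := by
      rw [Real.exp_neg]; ring_nf
    have : 1 / Real.exp 1 ≤ Real.exp t := by rw [← h3]; exact this
    have he : Real.exp 1 ≤ 3 := by nlinarith [Real.exp_one_lt_d9]
    have hp : (0:ℝ) < Real.exp 1 := Real.exp_pos 1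
    calc (1:ℝ)/3 ≤ 1 / Real.exp 1 := by
          apply div_le_div_of_nonneg_left (by norm_num) hp he
    _ ≤ Real.exp t := this
  have hpos : (0:ℝ) < 1 + Real.exp t := by positivity
  rw [div_le_div_iff₀ (by norm_num) (by positivity)]
  nlinarith [Real.exp_pos t]

theorem logistic_expconcave_small_x (D x : ℝ) (hD : 2 ≤ D) (hx : |x| ≤ 1 / D)
    (w w₀ : ℝ) (hw : w ∈ Set.Icc (-D) D) (hw₀ : w₀ ∈ Set.Icc (-D) D) :
    Real.log (1 + Real.exp (x * w)) ≥
      Real.log (1 + Real.exp (x * w₀))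
        + (x * Real.exp (x * w₀) / (1 + Real.exp (x * w₀))) * (w - w₀)
        + (1 / (16 * D)) * (x * Real.exp (x * w₀) / (1 + Real.exp (x * w₀))) ^ 2
            * (w - w₀) ^ 2 := by
  have hDpos : (0:ℝ) < D := by linarith
  set L : ℝ := x * Real.exp (x * w₀) / (1 + Real.exp (x * w₀)) with hL
  set c : ℝ := (1 / (16 * D)) * L ^ 2 with hc
  set G : ℝ → ℝ := fun u => Real.log (1 + Real.exp (x * u)) - c * (u - w₀) ^ 2 with hGdef
  have hpos : ∀ u : ℝ, (0:ℝ) < 1 + Real.exp (x * u) := fun u => by positivity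
  -- derivatives
  have hd1 : ∀ u : ℝ, HasDerivAt G
      (x * Real.exp (x * u) / (1 + Real.exp (x * u)) - c * (2 * (u - w₀))) u := by
    intro u
    have h1 : HasDerivAt (fun u : ℝ => x * u) x u := by
      simpa using (hasDerivAt_id u).const_mul x
    have h2 : HasDerivAt (fun u : ℝ => Real.exp (x * u)) (Real.exp (x * u) * x) u :=
      (Real.hasDerivAt_exp _).comp u h1
    have h3 : HasDerivAt (fun u : ℝ => 1 + Real.exp (x * u)) (Real.exp (x * u) * x) u :=
      h2.const_add 1
    have h4 := h3.log (ne_of_gt (hpos u))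
    have h5 : HasDerivAt (fun u : ℝ => c * (u - w₀) ^ 2) (c * (2 * (u - w₀))) u := by
      have : HasDerivAt (fun u : ℝ => (u - w₀) ^ 2) (2 * (u - w₀) ^ 1 * 1) u :=
        ((hasDerivAt_id u).sub_const w₀).pow 2
      simpa [mul_comm, mul_assoc] using this.const_mul c
    have := h4.sub h5
    refine this.congr_deriv ?_
    field_simp
  have hd2 : ∀ u : ℝ, HasDerivAt
      (fun u => x * Real.exp (x * u) / (1 + Real.exp (x * u)) - c * (2 * (u - w₀)))
      (x ^ 2 * Real.exp (x * u) / (1 + Real.exp (x * u)) ^ 2 - 2 * c) u := by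
    intro u
    have h1 : HasDerivAt (fun u : ℝ => x * u) x u := by
      simpa using (hasDerivAt_id u).const_mul x
    have h2 : HasDerivAt (fun u : ℝ => Real.exp (x * u)) (Real.exp (x * u) * x) u :=
      (Real.hasDerivAt_exp _).comp u h1
    have hnum : HasDerivAt (fun u : ℝ => x * Real.exp (x * u)) (x * (Real.exp (x * u) * x)) u :=
      h2.const_mul x
    have hden : HasDerivAt (fun u : ℝ => 1 + Real.exp (x * u)) (Real.exp (x * u) * x) u :=
      h2.const_add 1
    have hdiv := hnum.div hden (ne_of_gt (hpos u))
    have hlin : HasDerivAt (fun u : ℝ => c * (2 * (u - w₀))) (2 * c) u := by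
      have : HasDerivAt (fun u : ℝ => u - w₀) 1 u := (hasDerivAt_id u).sub_const w₀
      have := (this.const_mul 2).const_mul c
      simpa [mul_comm, mul_assoc] using this
    have := hdiv.sub hlin
    refine this.congr_deriv ?_
    have hne : (1 + Real.exp (x * u)) ≠ 0 := ne_of_gt (hpos u)
    field_simp
    ring
  -- second derivative nonneg on Icc
  have hsec : ∀ u ∈ Set.Icc (-D) D,
      (0:ℝ) ≤ x ^ 2 * Real.exp (x * u) / (1 + Real.exp (x * u)) ^ 2 - 2 * c := by
    intro u hu
    have habs : |x * u| ≤ 1 := by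
      rw [abs_mul]
      calc |x| * |u| ≤ (1 / D) * D := by
            apply mul_le_mul hx _ (abs_nonneg u) (by positivity)
            rw [abs_le]; exact ⟨hu.1, hu.2⟩
      _ = 1 := by field_simp
    have hkey := logistic_key (x * u) habs
    have hL2 : L ^ 2 ≤ x ^ 2 := by
      rw [hL, div_pow, mul_pow]
      have h1 : Real.exp (x * w₀) ^ 2 ≤ (1 + Real.exp (x * w₀)) ^ 2 := by
        apply pow_le_pow_left₀ (Real.exp_pos _).le (by linarith [Real.exp_pos (x * w₀)])
      calc x ^ 2 * Real.exp (x * w₀) ^ 2 / (1 + Real.exp (x * w₀)) ^ 2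
          ≤ x ^ 2 * (1 + Real.exp (x * w₀)) ^ 2 / (1 + Real.exp (x * w₀)) ^ 2 := by
            apply div_le_div_of_nonneg_right _ (by positivity)
            exact mul_le_mul_of_nonneg_left h1 (sq_nonneg x)
      _ = x ^ 2 := by field_simp
    have hc2 : 2 * c ≤ x ^ 2 / 16 := by
      rw [hc]
      calc 2 * (1 / (16 * D) * L ^ 2) = L ^ 2 / (8 * D) := by ring
      _ ≤ x ^ 2 / 16 := by
          apply div_le_div₀ (sq_nonneg x) hL2 (by norm_num) (by linarith)
    have : x ^ 2 / 16 ≤ x ^ 2 * Real.exp (x * u) / (1 + Real.exp (x * u)) ^ 2 := by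
      calc x ^ 2 / 16 = x ^ 2 * (1 / 16) := by ring
      _ ≤ x ^ 2 * (Real.exp (x * u) / (1 + Real.exp (x * u)) ^ 2) :=
          mul_le_mul_of_nonneg_left hkey (sq_nonneg x)
      _ = x ^ 2 * Real.exp (x * u) / (1 + Real.exp (x * u)) ^ 2 := by ring
    linarith
  -- convexity of G on Icc
  have hconv : ConvexOn ℝ (Set.Icc (-D) D) G := by
    apply convexOn_of_hasDerivWithinAt2_nonneg (convex_Icc _ _)
      (f' := fun u => x * Real.exp (x * u) / (1 + Real.exp (x * u)) - c * (2 * (u - w₀)))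
      (f'' := fun u => x ^ 2 * Real.exp (x * u) / (1 + Real.exp (x * u)) ^ 2 - 2 * c)
    · exact fun u _ => ((hd1 u).continuousAt).continuousWithinAt
    · exact fun u hu => (hd1 u).hasDerivWithinAt
    · exact fun u hu => (hd2 u).hasDerivWithinAt
    · intro u hu
      exact hsec u (interior_subset hu)
  -- tangent line inequality
  have hG'w₀ : HasDerivAt G L w₀ := by
    have := hd1 w₀
    simpa using this
  have htan : G w₀ + L * (w - w₀) ≤ G w := by
    rcases lt_trichotomy w w₀ with h | h | h
    · have hs := hconv.slope_le_of_hasDerivAt hw hw₀ h hG'w₀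
      rw [slope_def_field, div_le_iff₀ (by linarith : (0:ℝ) < w₀ - w)] at hs
      have he : L * (w - w₀) = -(L * (w₀ - w)) := by ring
      linarith
    · simp [h]
    · have hs := hconv.le_slope_of_hasDerivAt hw₀ hw h hG'w₀
      rw [slope_def_field] at hs
      rw [le_div_iff₀ (by linarith : (0:ℝ) < w - w₀)] at hs
      linarith
  -- conclude
  have hGw : G w = Real.log (1 + Real.exp (x * w)) - c * (w - w₀) ^ 2 := rfl
  have hGw₀ : G w₀ = Real.log (1 + Real.exp (x * w₀)) := by simp [hGdef]
  rw [ge_iff_le]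
  have := htan
  rw [hGw, hGw₀] at this
  rw [hL] at this ⊢
  rw [hc] at this
  linarith
end

section
/- Let p ∈ (0,1/2] and ε > 0 with p+ε ≤ 1. Any (possibly randomized) algorithm that, given m independent tosses of a coin with bias either p or p+ε, outputs the correct bias with probability at least 3/4 under both hypotheses, must use m ≥ p/(16 ε²) tosses. -/
open MeasureTheory

/-- The Bernoulli measure on `Bool` with bias `p` (probability of `true`). -/
noncomputable def ber (p : ℝ) : Measure Bool :=
  ENNReal.ofReal p • Measure.dirac true + ENNReal.ofReal (1 - p) • Measure.dirac false

instance (p : ℝ) : IsFiniteMeasure (ber p) := by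
  constructor
  simp only [ber, Measure.add_apply, Measure.smul_apply, smul_eq_mul,
    Measure.dirac_apply' _ MeasurableSet.univ]
  exact ENNReal.add_lt_top.2 ⟨by simp [ENNReal.mul_lt_top, ENNReal.ofReal_lt_top],
    by simp [ENNReal.mul_lt_top, ENNReal.ofReal_lt_top]⟩

section aux

open Finset

lemma coin_a2' (p q : ℝ) (hp : 0 < p) (hp2 : p ≤ 1/2) (hpq : p < q) (hq1 : q ≤ 1) :
    p * (1 - (Real.sqrt p * Real.sqrt q + Real.sqrt (1-p) * Real.sqrt (1-q)) ^ 2)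
      ≤ 2 * (q - p) ^ 2 := by
  have hq0 : 0 < q := hp.trans hpq
  have h1p : 0 ≤ 1 - p := by linarith
  have h1q : 0 ≤ 1 - q := by linarith
  have hsp := Real.sq_sqrt hp.le
  have hsq := Real.sq_sqrt hq0.le
  have hs1p := Real.sq_sqrt h1p
  have hs1q := Real.sq_sqrt h1q
  obtain ⟨a, ha⟩ : ∃ a : ℝ,
      a = Real.sqrt p * Real.sqrt q + Real.sqrt (1-p) * Real.sqrt (1-q) := ⟨_, rfl⟩
  obtain ⟨u, hu⟩ : ∃ u : ℝ, u = Real.sqrt q * Real.sqrt (1-p) := ⟨_, rfl⟩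
  obtain ⟨v, hv⟩ : ∃ v : ℝ, v = Real.sqrt p * Real.sqrt (1-q) := ⟨_, rfl⟩
  rw [← ha]
  have key : a ^ 2 + (u - v) ^ 2
      = (Real.sqrt p ^ 2 + Real.sqrt (1-p) ^ 2) * (Real.sqrt q ^ 2 + Real.sqrt (1-q) ^ 2) := by
    rw [ha, hu, hv]; ring
  rw [hsp, hsq, hs1p, hs1q] at key
  have hu2 : u ^ 2 = Real.sqrt q ^ 2 * Real.sqrt (1-p) ^ 2 := by rw [hu]; ring
  rw [hsq, hs1p] at hu2
  have hv2 : v ^ 2 = Real.sqrt p ^ 2 * Real.sqrt (1-q) ^ 2 := by rw [hv]; ring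
  rw [hsp, hs1q] at hv2
  have hun : 0 ≤ u := by rw [hu]; positivity
  have hvn : 0 ≤ v := by rw [hv]; positivity
  have huv : (u - v) ^ 2 * (u + v) ^ 2 = (q - p) ^ 2 := by
    have e : (u - v) ^ 2 * (u + v) ^ 2 = (u ^ 2 - v ^ 2) ^ 2 := by ring
    rw [e, hu2, hv2]; ring
  have huplus : p / 2 ≤ (u + v) ^ 2 := by
    have t1a : p * (1/2) ≤ p * (1 - p) := mul_le_mul_of_nonneg_left (by linarith) hp.le
    have t1b : p * (1 - p) ≤ q * (1 - p) := mul_le_mul_of_nonneg_right hpq.le (by linarith)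
    have e2 : (u + v) ^ 2 = u ^ 2 + (2 * (u * v) + v ^ 2) := by ring
    have h1 : 0 ≤ 2 * (u * v) + v ^ 2 := by positivity
    linarith [hu2]
  have huvb : p * (u - v) ^ 2 ≤ 2 * (q - p) ^ 2 := by
    have s := mul_le_mul_of_nonneg_left huplus (sq_nonneg (u - v))
    have e3 : p * (u - v) ^ 2 = 2 * ((u - v) ^ 2 * (p / 2)) := by ring
    linarith [huv]
  have e : a ^ 2 = 1 - (u - v) ^ 2 := by linarith [key]
  rw [e]; linarith [huvb]

lemma coin_core' (p q : ℝ) (hp : 0 < p) (hp2 : p ≤ 1/2) (hpq : p < q) (hq1 : q ≤ 1) (m : ℕ)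
    (g : (Fin m → Bool) → ℝ) (hg0 : ∀ b, 0 ≤ g b) (hg1 : ∀ b, g b ≤ 1)
    (h1 : 3/4 ≤ ∑ b : Fin m → Bool, (∏ i, (if b i then p else 1-p)) * g b)
    (h2 : 3/4 ≤ ∑ b : Fin m → Bool, (∏ i, (if b i then q else 1-q)) * (1 - g b)) :
    (m : ℝ) ≥ p / (16 * (q-p)^2) := by
  have hq0 : 0 < q := hp.trans hpq
  have h1p : 0 ≤ 1 - p := by linarith
  have h1q : 0 ≤ 1 - q := by linarith
  set w : ℝ → Bool → ℝ := fun r x => if x then r else 1 - r with hw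
  have hwnn : ∀ r : ℝ, 0 ≤ r → r ≤ 1 → ∀ x, 0 ≤ w r x := by
    intro r h0 h1 x; cases x <;> simp [hw] <;> linarith
  set P : (Fin m → Bool) → ℝ := fun b => ∏ i, w p (b i) with hP
  set Q : (Fin m → Bool) → ℝ := fun b => ∏ i, w q (b i) with hQ
  have h1' : 3/4 ≤ ∑ b : Fin m → Bool, P b * g b := h1
  have h2' : 3/4 ≤ ∑ b : Fin m → Bool, Q b * (1 - g b) := h2
  clear h1 h2
  set F : (Fin m → Bool) → ℝ := fun b => ∏ i, Real.sqrt (w p (b i)) with hF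
  set G : (Fin m → Bool) → ℝ := fun b => ∏ i, Real.sqrt (w q (b i)) with hG
  have hF0 : ∀ b, 0 ≤ F b := fun b => prod_nonneg fun i _ => Real.sqrt_nonneg _
  have hG0 : ∀ b, 0 ≤ G b := fun b => prod_nonneg fun i _ => Real.sqrt_nonneg _
  have hF2 : ∀ b, F b ^ 2 = P b := by
    intro b
    rw [hF, hP, ← Finset.prod_pow]
    exact Finset.prod_congr rfl fun i _ => Real.sq_sqrt (hwnn p hp.le (by linarith) _)
  have hG2 : ∀ b, G b ^ 2 = Q b := by
    intro b
    rw [hG, hQ, ← Finset.prod_pow]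
    exact Finset.prod_congr rfl fun i _ => Real.sq_sqrt (hwnn q hq0.le hq1 _)
  have sum_pi : ∀ f : Bool → ℝ, ∑ b : Fin m → Bool, ∏ i, f (b i) = (f true + f false) ^ m := by
    intro f
    have := Finset.prod_univ_sum (fun _ : Fin m => (univ : Finset Bool)) (fun _ x => f x)
    rw [Fintype.piFinset_univ] at this
    rw [← this]
    simp [Fintype.sum_bool]
  have sumP : ∑ b : Fin m → Bool, P b = 1 := by
    rw [hP]; rw [sum_pi (w p)]; simp [hw]
  have sumQ : ∑ b : Fin m → Bool, Q b = 1 := by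
    rw [hQ]; rw [sum_pi (w q)]; simp [hw]
  obtain ⟨a, ha⟩ : ∃ a : ℝ,
      a = Real.sqrt p * Real.sqrt q + Real.sqrt (1-p) * Real.sqrt (1-q) := ⟨_, rfl⟩
  have sumFG : ∑ b : Fin m → Bool, F b * G b = a ^ m := by
    have hb : ∀ b : Fin m → Bool, F b * G b
        = ∏ i, Real.sqrt (w p (b i)) * Real.sqrt (w q (b i)) := by
      intro b; rw [hF, hG, ← Finset.prod_mul_distrib]
    simp_rw [hb]
    refine (sum_pi fun x => Real.sqrt (w p x) * Real.sqrt (w q x)).trans ?_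
    rw [ha]; simp [hw]
  have hQg : ∑ b : Fin m → Bool, Q b * g b ≤ 1/4 := by
    have e : ∑ b : Fin m → Bool, Q b * (1 - g b)
        = (∑ b : Fin m → Bool, Q b) - ∑ b : Fin m → Bool, Q b * g b := by
      rw [← Finset.sum_sub_distrib]
      exact Finset.sum_congr rfl fun b _ => by ring
    rw [e, sumQ] at h2'; linarith
  have hD : 1/2 ≤ ∑ b : Fin m → Bool, (P b - Q b) * (g b - 1/2) := by
    have e : ∑ b : Fin m → Bool, (P b - Q b) * (g b - 1/2)
        = (∑ b : Fin m → Bool, P b * g b) - (∑ b : Fin m → Bool, Q b * g b)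
          - (1/2) * (∑ b : Fin m → Bool, P b) + (1/2) * (∑ b : Fin m → Bool, Q b) := by
      rw [show (∑ b : Fin m → Bool, (P b - Q b) * (g b - 1/2))
          = ∑ b : Fin m → Bool,
            (P b * g b - Q b * g b - (1/2) * P b + (1/2) * Q b) from
        Finset.sum_congr rfl fun b _ => by ring]
      rw [Finset.sum_add_distrib, Finset.sum_sub_distrib, Finset.sum_sub_distrib,
        ← Finset.mul_sum, ← Finset.mul_sum]
    rw [e, sumP, sumQ]; linarith
  have habs : ∑ b : Fin m → Bool, (P b - Q b) * (g b - 1/2)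
      ≤ (1/2) * ∑ b : Fin m → Bool, |P b - Q b| := by
    rw [Finset.mul_sum]
    apply Finset.sum_le_sum
    intro b _
    calc (P b - Q b) * (g b - 1/2) ≤ |(P b - Q b) * (g b - 1/2)| := le_abs_self _
      _ = |P b - Q b| * |g b - 1/2| := abs_mul _ _
      _ ≤ |P b - Q b| * (1/2) := by
          apply mul_le_mul_of_nonneg_left _ (abs_nonneg _)
          rw [abs_le]; constructor <;> [linarith [hg0 b]; linarith [hg1 b]]
      _ = (1/2) * |P b - Q b| := by ring
  have hL1 : 1 ≤ ∑ b : Fin m → Bool, |P b - Q b| := by linarith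
  have habsFG : ∀ b, |P b - Q b| = |F b - G b| * (F b + G b) := by
    intro b
    rw [← hF2, ← hG2]
    rw [show F b ^ 2 - G b ^ 2 = (F b - G b) * (F b + G b) by ring, abs_mul,
      abs_of_nonneg (by positivity : (0:ℝ) ≤ F b + G b)]
  have hCS : (∑ b : Fin m → Bool, |P b - Q b|) ^ 2
      ≤ (2 - 2 * a ^ m) * (2 + 2 * a ^ m) := by
    simp_rw [habsFG]
    calc (∑ b : Fin m → Bool, |F b - G b| * (F b + G b)) ^ 2
        ≤ (∑ b : Fin m → Bool, |F b - G b| ^ 2) * ∑ b : Fin m → Bool, (F b + G b) ^ 2 :=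
          Finset.sum_mul_sq_le_sq_mul_sq _ _ _
      _ = (2 - 2 * a ^ m) * (2 + 2 * a ^ m) := by
          have e1 : ∑ b : Fin m → Bool, |F b - G b| ^ 2 = 2 - 2 * a ^ m := by
            have t : ∀ b : Fin m → Bool, |F b - G b| ^ 2
                = P b + Q b - 2 * (F b * G b) := by
              intro b
              rw [sq_abs, show (F b - G b) ^ 2
                = F b ^ 2 + G b ^ 2 - 2 * (F b * G b) from by ring, hF2, hG2]
            simp_rw [t]
            rw [Finset.sum_sub_distrib, Finset.sum_add_distrib, ← Finset.mul_sum,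
              sumFG, sumP, sumQ]
            ring
          have e2 : ∑ b : Fin m → Bool, (F b + G b) ^ 2 = 2 + 2 * a ^ m := by
            have t : ∀ b : Fin m → Bool, (F b + G b) ^ 2
                = P b + Q b + 2 * (F b * G b) := by
              intro b
              rw [show (F b + G b) ^ 2
                = F b ^ 2 + G b ^ 2 + 2 * (F b * G b) from by ring, hF2, hG2]
            simp_rw [t]
            rw [Finset.sum_add_distrib, Finset.sum_add_distrib, ← Finset.mul_sum,
              sumFG, sumP, sumQ]
            ring
          rw [e1, e2]
  have hA2 : (a ^ m) ^ 2 ≤ 3/4 := by nlinarith [hL1, hCS]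
  have h1a2 : p * (1 - a ^ 2) ≤ 2 * (q - p) ^ 2 := by
    rw [ha]; exact coin_a2' p q hp hp2 hpq hq1
  have ha2nn : 0 ≤ a ^ 2 := sq_nonneg a
  have hber : 1 + (m:ℝ) * (a ^ 2 - 1) ≤ (a ^ 2) ^ m := by
    have := one_add_mul_le_pow (a := a ^ 2 - 1) (by linarith) m
    simpa using this
  have hpow : (a ^ 2) ^ m = (a ^ m) ^ 2 := by rw [← pow_mul, ← pow_mul, Nat.mul_comm]
  have hm4 : 1/4 ≤ (m:ℝ) * (1 - a ^ 2) := by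
    rw [hpow] at hber
    have e : (m:ℝ) * (1 - a ^ 2) = -((m:ℝ) * (a ^ 2 - 1)) := by ring
    linarith
  have hmn : (0:ℝ) ≤ (m:ℝ) := Nat.cast_nonneg m
  have hchain : p / 4 ≤ (m:ℝ) * (2 * (q - p) ^ 2) := by
    have s1 : p * (1/4) ≤ p * ((m:ℝ) * (1 - a ^ 2)) :=
      mul_le_mul_of_nonneg_left hm4 hp.le
    have s2 : (m:ℝ) * (p * (1 - a ^ 2)) ≤ (m:ℝ) * (2 * (q - p) ^ 2) :=
      mul_le_mul_of_nonneg_left h1a2 hmn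
    have e : p * ((m:ℝ) * (1 - a ^ 2)) = (m:ℝ) * (p * (1 - a ^ 2)) := by ring
    linarith
  rw [ge_iff_le,
    div_le_iff₀ (mul_pos (by norm_num : (0:ℝ) < 16) (pow_pos (sub_pos.2 hpq) 2))]
  have hXnn : (0:ℝ) ≤ (m:ℝ) * (2 * (q - p) ^ 2) := by positivity
  have e : (m:ℝ) * (16 * (q - p) ^ 2) = 8 * ((m:ℝ) * (2 * (q - p) ^ 2)) := by ring
  linarith

lemma ber_single (r : ℝ) (x : Bool) :
    ber r {x} = ENNReal.ofReal (if x then r else 1 - r) := by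
  cases x <;>
    simp [ber, Measure.dirac_apply' _ (measurableSet_singleton _), Set.indicator]

lemma pi_ber_single (r : ℝ) (m : ℕ) (hr0 : 0 ≤ r) (hr1 : r ≤ 1) (b : Fin m → Bool) :
    (Measure.pi fun _ : Fin m => ber r) {b}
      = ENNReal.ofReal (∏ i, if b i then r else 1 - r) := by
  rw [← Set.univ_pi_singleton b, Measure.pi_pi]
  simp_rw [ber_single r]
  rw [← ENNReal.ofReal_prod_of_nonneg]
  intro i _; by_cases h : b i <;> simp [h] <;> linarith

lemma prod_ber_apply (r : ℝ) (m : ℕ) (hr0 : 0 ≤ r) (hr1 : r ≤ 1)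
    {Ω : Type} [MeasurableSpace Ω] (ρ : Measure Ω) [IsProbabilityMeasure ρ]
    {S : Set ((Fin m → Bool) × Ω)} (hS : MeasurableSet S) :
    ((Measure.pi fun _ : Fin m => ber r).prod ρ) S
      = ENNReal.ofReal (∑ b : Fin m → Bool,
          (∏ i, if b i then r else 1 - r) * (ρ (Prod.mk b ⁻¹' S)).toReal) := by
  rw [Measure.prod_apply hS, MeasureTheory.lintegral_fintype]
  rw [ENNReal.ofReal_sum_of_nonneg]
  · refine Finset.sum_congr rfl fun b _ => ?_
    rw [pi_ber_single r m hr0 hr1 b, ENNReal.ofReal_mul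
      (Finset.prod_nonneg fun i _ => by by_cases h : b i <;> simp [h] <;> linarith),
      ENNReal.ofReal_toReal (measure_ne_top ρ _), mul_comm]
  · intro b _
    exact mul_nonneg
      (Finset.prod_nonneg fun i _ => by by_cases h : b i <;> simp [h] <;> linarith)
      ENNReal.toReal_nonneg

end aux

/-- Theorem 2.1: any (possibly randomized) algorithm `A`, using `m` tosses of a coin with
bias either `p` or `p + ε` together with independent auxiliary randomness `ρ`, that outputs
the correct bias with probability at least `3/4` under both hypotheses (`false` meaning
"bias `p`" and `true` meaning "bias `p + ε`") must satisfy `m ≥ p / (16 ε²)`. -/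
theorem coin_sample_complexity (p ε : ℝ) (hp : 0 < p) (hp2 : p ≤ 1 / 2)
    (hε : 0 < ε) (hpe : p + ε ≤ 1) (m : ℕ)
    {Ω : Type} [MeasurableSpace Ω] (ρ : Measure Ω) [IsProbabilityMeasure ρ]
    (A : (Fin m → Bool) → Ω → Bool) (hA : Measurable (Function.uncurry A))
    (hcorrect_p :
      ((Measure.pi fun _ : Fin m => ber p).prod ρ) {x | A x.1 x.2 = false} ≥ 3 / 4)
    (hcorrect_q :
      ((Measure.pi fun _ : Fin m => ber (p + ε)).prod ρ) {x | A x.1 x.2 = true} ≥ 3 / 4) :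
    (m : ℝ) ≥ p / (16 * ε ^ 2) := by
  have hS : MeasurableSet {x : (Fin m → Bool) × Ω | A x.1 x.2 = false} :=
    hA (measurableSet_singleton false)
  have hT : MeasurableSet {x : (Fin m → Bool) × Ω | A x.1 x.2 = true} :=
    hA (measurableSet_singleton true)
  set g : (Fin m → Bool) → ℝ :=
    fun b => (ρ (Prod.mk b ⁻¹' {x : (Fin m → Bool) × Ω | A x.1 x.2 = false})).toReal with hg
  have hg0 : ∀ b, 0 ≤ g b := fun b => ENNReal.toReal_nonneg
  have hg1 : ∀ b, g b ≤ 1 := by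
    intro b
    rw [hg]
    exact ENNReal.toReal_le_of_le_ofReal zero_le_one (by simpa using prob_le_one)
  have h34 : (3/4 : ENNReal) = ENNReal.ofReal (3/4 : ℝ) := by
    rw [ENNReal.ofReal_div_of_pos (by norm_num)]
    norm_num
  -- first hypothesis
  rw [ge_iff_le, prod_ber_apply p m hp.le (by linarith) ρ hS, h34,
    ENNReal.ofReal_le_ofReal_iff
      (Finset.sum_nonneg fun b _ => mul_nonneg
        (Finset.prod_nonneg fun i _ => by by_cases h : b i <;> simp [h] <;> linarith)
        ENNReal.toReal_nonneg)] at hcorrect_p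
  -- second hypothesis
  have hcompl : ∀ b : Fin m → Bool,
      (ρ (Prod.mk b ⁻¹' {x : (Fin m → Bool) × Ω | A x.1 x.2 = true})).toReal = 1 - g b := by
    intro b
    have hbm : MeasurableSet (Prod.mk b ⁻¹' {x : (Fin m → Bool) × Ω | A x.1 x.2 = false}) :=
      measurable_prodMk_left hS
    have e : Prod.mk b ⁻¹' {x : (Fin m → Bool) × Ω | A x.1 x.2 = true}
        = (Prod.mk b ⁻¹' {x : (Fin m → Bool) × Ω | A x.1 x.2 = false})ᶜ := by
      ext ω
      cases h : A b ω <;> simp [h]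
    rw [e, measure_compl hbm (measure_ne_top ρ _), measure_univ,
      ENNReal.toReal_sub_of_le prob_le_one ENNReal.one_ne_top, ENNReal.toReal_one, hg]
  rw [ge_iff_le, prod_ber_apply (p + ε) m (by linarith) (by linarith) ρ hT, h34,
    ENNReal.ofReal_le_ofReal_iff
      (Finset.sum_nonneg fun b _ => mul_nonneg
        (Finset.prod_nonneg fun i _ => by by_cases h : b i <;> simp [h] <;> linarith)
        ENNReal.toReal_nonneg)] at hcorrect_q
  simp_rw [hcompl] at hcorrect_q
  have := coin_core' p (p + ε) hp hp2 (by linarith) hpe m g hg0 hg1 hcorrect_p hcorrect_q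
  rwa [show p + ε - p = ε by ring] at this
end

section
/- Let real numbers v_1, …, v_T satisfy |v_t| ≤ r for all t, and let ε > 0. Then Σ_{t=1}^T v_t² / (Σ_{τ=1}^t v_τ² + ε) ≤ log(r² T/ε + 1). -/
theorem self_normalized_sum_bound (T : ℕ) (v : ℕ → ℝ) (r ε : ℝ) (hε : 0 < ε)
    (hr : ∀ t ∈ Finset.range T, |v t| ≤ r) :
    ∑ t ∈ Finset.range T, (v t) ^ 2 / ((∑ τ ∈ Finset.range (t + 1), (v τ) ^ 2) + ε)
      ≤ Real.log (r ^ 2 * T / ε + 1) := by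
  rcases Nat.eq_zero_or_pos T with hT | hT
  · simp [hT]
  set A : ℕ → ℝ := fun t => (∑ τ ∈ Finset.range t, (v τ) ^ 2) + ε with hA
  have hApos : ∀ t, 0 < A t := by
    intro t
    have : (0:ℝ) ≤ ∑ τ ∈ Finset.range t, (v τ) ^ 2 :=
      Finset.sum_nonneg fun i _ => sq_nonneg _
    simp only [hA]; linarith
  have key : ∀ n, ∑ t ∈ Finset.range n, (v t) ^ 2 / A (t + 1)
      ≤ Real.log (A n) - Real.log (A 0) := by
    intro n
    induction n with
    | zero => simp
    | succ n ih =>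
      rw [Finset.sum_range_succ]
      have ha := hApos n
      have hb := hApos (n + 1)
      have hlog := Real.log_le_sub_one_of_pos (show 0 < A n / A (n + 1) by positivity)
      rw [Real.log_div ha.ne' hb.ne'] at hlog
      have hv : A (n + 1) = A n + (v n) ^ 2 := by
        simp only [hA, Finset.sum_range_succ]; ring
      have h1 : (v n) ^ 2 / A (n + 1) ≤ Real.log (A (n + 1)) - Real.log (A n) := by
        have h2 : A n / A (n + 1) - 1 = -((v n) ^ 2 / A (n + 1)) := by
          field_simp
          linarith [hv]
        linarith [hlog, h2.symm.le, h2.le]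
      linarith
  have hsum := key T
  have hA0 : A 0 = ε := by simp [hA]
  have hr0 : 0 ≤ r := le_trans (abs_nonneg _) (hr 0 (Finset.mem_range.mpr hT))
  have hAT : A T ≤ r ^ 2 * T + ε := by
    have : ∑ τ ∈ Finset.range T, (v τ) ^ 2 ≤ ∑ τ ∈ Finset.range T, r ^ 2 := by
      apply Finset.sum_le_sum
      intro i hi
      calc (v i) ^ 2 = |v i| ^ 2 := (sq_abs _).symm
        _ ≤ r ^ 2 := pow_le_pow_left₀ (abs_nonneg _) (hr i hi) 2
    simp only [hA]
    rw [Finset.sum_const, Finset.card_range] at this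
    simp only [nsmul_eq_mul, mul_comm] at this
    linarith
  have hfinal : Real.log (A T) - Real.log ε ≤ Real.log (r ^ 2 * T / ε + 1) := by
    rw [← Real.log_div (hApos T).ne' hε.ne']
    apply Real.log_le_log (by positivity)
    rw [div_le_iff₀ hε]
    have : (r ^ 2 * T / ε + 1) * ε = r ^ 2 * T + ε := by field_simp
    rw [this]; exact hAT
  calc ∑ t ∈ Finset.range T, (v t) ^ 2 / ((∑ τ ∈ Finset.range (t + 1), (v τ) ^ 2) + ε)
      = ∑ t ∈ Finset.range T, (v t) ^ 2 / A (t + 1) := rfl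
    _ ≤ Real.log (A T) - Real.log (A 0) := hsum
    _ = Real.log (A T) - Real.log ε := by rw [hA0]
    _ ≤ Real.log (r ^ 2 * T / ε + 1) := hfinal
end
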